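/- Let ε > 0, let S ⊂ (0,1) be an open set with Lebesgue measure L¹(S) < ε, and let γ: [0,1] → ℝ⁴ be a Lipschitz curve such that γ'(t) = (0,1,0,0) for almost every t ∈ (0,1) ∖ S and such that γ₄ is strictly decreasing on (0,1) ∖ S (if a, b ∈ (0,1) ∖ S and a < b then γ₄(b) < γ₄(a)). Then for every C¹ horizontal curve Γ: [0,1] → ℝ⁴ in the Engel group, the Lebesgue measure of {t ∈ [0,1] : Γ(t) = γ(t)} is less than ε. -/

import Mathlib

open MeasureTheory Set

/-- A vector `u` is horizontal at the point `ζ` in the Engel group. -/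
def EngelHoriz (ζ u : EuclideanSpace ℝ (Fin 4)) : Prop :=
  u 2 = u 1 * ζ 0 ∧ u 3 = u 1 * (ζ 0) ^ 2 / 2

/-- The vector `(0,1,0,0)` in ℝ⁴. -/
def e₂ : EuclideanSpace ℝ (Fin 4) := WithLp.toLp 2 (fun i => if i = 1 then 1 else 0)

/-- A Lipschitz curve whose derivative is `(0,1,0,0)` almost everywhere off a small open
set `S` and whose fourth component is strictly decreasing off `S` agrees with any C¹
horizontal curve in the Engel group only on a set of measure less than `ε`. -/
theorem bad_curve_meets_C1_in_small_set (ε : ℝ) (hε : 0 < ε)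
    (S : Set ℝ) (hSopen : IsOpen S) (hSsub : S ⊆ Set.Ioo 0 1)
    (hSmeas : volume S < ENNReal.ofReal ε)
    (γ : ℝ → EuclideanSpace ℝ (Fin 4))
    (K : NNReal) (hLip : LipschitzOnWith K γ (Set.Icc 0 1))
    (hderiv : ∀ᵐ t ∂(volume.restrict (Set.Ioo (0:ℝ) 1 \ S)), HasDerivAt γ e₂ t)
    (hdec : ∀ a ∈ Set.Ioo (0:ℝ) 1 \ S, ∀ b ∈ Set.Ioo (0:ℝ) 1 \ S,
      a < b → γ b 3 < γ a 3)
    (Γ Γ' : ℝ → EuclideanSpace ℝ (Fin 4))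
    (hΓ : ∀ t ∈ Set.Icc (0:ℝ) 1, HasDerivWithinAt Γ (Γ' t) (Set.Icc (0:ℝ) 1) t)
    (hΓ'c : ContinuousOn Γ' (Set.Icc (0:ℝ) 1))
    (hhoriz : ∀ t ∈ Set.Icc (0:ℝ) 1, EngelHoriz (Γ t) (Γ' t)) :
    volume {t ∈ Set.Icc (0:ℝ) 1 | Γ t = γ t} < ENNReal.ofReal ε := by
  set E : Set ℝ := {t ∈ Set.Icc (0:ℝ) 1 | Γ t = γ t} with hE
  have hIooS : MeasurableSet (Set.Ioo (0:ℝ) 1 \ S) :=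
    measurableSet_Ioo.diff hSopen.measurableSet
  -- continuity of the curves
  have hΓcont : ContinuousOn Γ (Set.Icc (0:ℝ) 1) :=
    fun t ht => (hΓ t ht).continuousWithinAt
  have hγcont : ContinuousOn γ (Set.Icc (0:ℝ) 1) := hLip.continuousOn
  -- E is closed
  have hEclosed : IsClosed E := by
    have : E = Set.Icc (0:ℝ) 1 ∩
        (fun t => (Γ t, γ t)) ⁻¹' (Set.diagonal (EuclideanSpace ℝ (Fin 4))) := by
      ext t
      simp only [hE, Set.mem_setOf_eq, Set.mem_inter_iff, Set.mem_preimage,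
        Set.mem_diagonal_iff]
    rw [this]
    exact ContinuousOn.preimage_isClosed_of_isClosed
      (hΓcont.prodMk hγcont) isClosed_Icc isClosed_diagonal
  set A : Set ℝ := E ∩ (Set.Ioo (0:ℝ) 1 \ S) with hA
  have hAmeas : MeasurableSet A := hEclosed.measurableSet.inter hIooS
  -- the bad set where γ fails to have derivative e₂
  set N : Set ℝ := {t | ¬ HasDerivAt γ e₂ t} with hN
  have hN0 : volume (N ∩ (Set.Ioo (0:ℝ) 1 \ S)) = 0 := by
    have := (ae_iff).1 hderiv
    rwa [Measure.restrict_apply' hIooS] at this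
  -- key claim: A is null
  have hA0 : volume A = 0 := by
    by_contra hpos
    set T : Set ℝ := toMeasurable volume (N ∩ (Set.Ioo (0:ℝ) 1 \ S)) with hT
    have hT0 : volume T = 0 := by
      rw [hT, measure_toMeasurable]; exact hN0
    set B : Set ℝ := A \ T with hB
    have hBmeas : MeasurableSet B :=
      hAmeas.diff (measurableSet_toMeasurable _ _)
    have hBpos : volume B ≠ 0 := by
      intro h0
      apply hpos
      have : volume A ≤ volume B + volume T := by
        refine le_trans (measure_mono ?_) (measure_union_le _ _)
        intro x hx
        by_cases hxT : x ∈ T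
        · exact Or.inr hxT
        · exact Or.inl ⟨hx, hxT⟩
      simpa [h0, hT0] using le_antisymm (by simpa [h0, hT0] using this) (zero_le)
    -- every point of B is in A and has derivative e₂
    have hBA : B ⊆ A := fun x hx => hx.1
    have hBd : ∀ x ∈ B, HasDerivAt γ e₂ x := by
      intro x hx
      by_contra hcon
      exact hx.2 (subset_toMeasurable _ _ ⟨hcon, hx.1.2⟩)
    have hBIcc : B ⊆ Set.Icc (0:ℝ) 1 := fun x hx =>
      Set.Ioo_subset_Icc_self (hBA hx).2.1
    -- pick a density point of B inside B
    have hev : ∀ᵐ t ∂(volume.restrict B),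
        t ∈ B ∧ Filter.Tendsto
          (fun r => volume (B ∩ Metric.closedBall t r) / volume (Metric.closedBall t r))
          (nhdsWithin 0 (Set.Ioi 0)) (nhds 1) :=
      (ae_restrict_mem hBmeas).and (Besicovitch.ae_tendsto_measure_inter_div volume B)
    have hne : (ae (volume.restrict B)).NeBot := by
      refine ae_neBot.2 ?_
      intro h
      exact hBpos (by rwa [Measure.restrict_eq_zero] at h)
    obtain ⟨t₀, ht₀B, ht₀d⟩ := hev.exists
    have ht₀Icc : t₀ ∈ Set.Icc (0:ℝ) 1 := hBIcc ht₀B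
    -- B accumulates at t₀
    have hacc : ∀ δ : ℝ, 0 < δ → ∃ s ∈ B, s ≠ t₀ ∧ |s - t₀| < δ := by
      intro δ hδ
      have h1 : ∀ᶠ r in nhdsWithin (0:ℝ) (Set.Ioi 0),
          (1:ENNReal)/2 < volume (B ∩ Metric.closedBall t₀ r) / volume (Metric.closedBall t₀ r) :=
        ht₀d.eventually (eventually_gt_nhds (by norm_num))
      have h2 : ∀ᶠ r in nhdsWithin (0:ℝ) (Set.Ioi 0), r < δ :=
        eventually_nhdsWithin_of_eventually_nhds (eventually_lt_nhds hδ)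
      obtain ⟨r, hr1, hr2⟩ := (h1.and h2).exists
      have hrpos : volume (B ∩ Metric.closedBall t₀ r) ≠ 0 := by
        intro h0
        rw [h0] at hr1
        simp at hr1
      have hrpos' : volume ((B ∩ Metric.closedBall t₀ r) \ {t₀}) ≠ 0 := by
        intro h0
        apply hrpos
        have : volume (B ∩ Metric.closedBall t₀ r) ≤
            volume ((B ∩ Metric.closedBall t₀ r) \ {t₀}) + volume ({t₀} : Set ℝ) := by
          refine le_trans (measure_mono ?_) (measure_union_le _ _)
          intro x hx
          by_cases hxt : x = t₀
          · exact Or.inr (by simp [hxt])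
          · exact Or.inl ⟨hx, hxt⟩
        simpa [h0] using le_antisymm (by simpa [h0] using this) (zero_le)
      obtain ⟨s, hs⟩ := nonempty_of_measure_ne_zero hrpos'
      refine ⟨s, hs.1.1, by simpa using hs.2, ?_⟩
      have : dist s t₀ ≤ r := hs.1.2
      rw [Real.dist_eq] at this
      linarith
    have hneBot : (nhdsWithin t₀ (B \ {t₀})).NeBot := by
      rw [← mem_closure_iff_nhdsWithin_neBot, Metric.mem_closure_iff]
      intro δ hδ
      obtain ⟨s, hsB, hsne, hsd⟩ := hacc δ hδ
      exact ⟨s, ⟨hsB, hsne⟩, by rwa [Real.dist_eq, abs_sub_comm]⟩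
    -- the derivative of Γ at t₀ equals e₂
    have hΓ'e : Γ' t₀ = e₂ := by
      have h1 : HasDerivWithinAt Γ (Γ' t₀) B t₀ := (hΓ t₀ ht₀Icc).mono hBIcc
      have h2 : HasDerivWithinAt γ e₂ B t₀ := (hBd t₀ ht₀B).hasDerivWithinAt
      have s1 := hasDerivWithinAt_iff_tendsto_slope.1 h1
      have s2 := hasDerivWithinAt_iff_tendsto_slope.1 h2
      have hsl : Filter.Tendsto (slope γ t₀) (nhdsWithin t₀ (B \ {t₀})) (nhds (Γ' t₀)) := by
        refine s1.congr' ?_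
        filter_upwards [self_mem_nhdsWithin] with s hs
        have hΓs : Γ s = γ s := (hBA hs.1).1.2
        have hΓt : Γ t₀ = γ t₀ := (hBA ht₀B).1.2
        simp [slope, hΓs, hΓt]
      exact tendsto_nhds_unique hsl s2
    have hΓ'1 : Γ' t₀ 1 = 1 := by rw [hΓ'e]; simp [e₂]
    -- find a neighborhood where the second derivative component is positive
    have hct : ContinuousWithinAt (fun x => Γ' x 1) (Set.Icc (0:ℝ) 1) t₀ := by
      exact ((EuclideanSpace.proj (1 : Fin 4)).continuous.comp_continuousOn hΓ'c) t₀ ht₀Icc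
    have hev' : ∀ᶠ x in nhdsWithin t₀ (Set.Icc (0:ℝ) 1), 0 < Γ' x 1 := by
      apply hct.eventually
      have h1 : ∀ᶠ y in nhds (Γ' t₀ 1), (0:ℝ) < y := by
        rw [hΓ'1]; exact eventually_gt_nhds one_pos
      exact h1
    obtain ⟨U, hUopen, hUt₀, hU⟩ := mem_nhdsWithin.1 hev'
    obtain ⟨δ, hδpos, hδball⟩ := Metric.isOpen_iff.1 hUopen t₀ hUt₀
    have hposball : ∀ x ∈ Metric.ball t₀ δ ∩ Set.Icc (0:ℝ) 1, 0 < Γ' x 1 := by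
      intro x hx
      exact hU ⟨hδball hx.1, hx.2⟩
    -- pick a second point of B near t₀
    obtain ⟨s, hsB, hsne, hsd⟩ := hacc δ hδpos
    set a : ℝ := min s t₀ with ha
    set b : ℝ := max s t₀ with hb
    have hab : a < b := by
      rcases lt_or_gt_of_ne hsne with h | h
      · rw [ha, hb, min_eq_left h.le, max_eq_right h.le]; exact h
      · rw [ha, hb, min_eq_right h.le, max_eq_left h.le]; exact h
    have haB : a ∈ B := by rcases min_cases s t₀ with ⟨h, _⟩ | ⟨h, _⟩ <;> rw [ha, h] <;> assumption
    have hbB : b ∈ B := by rcases max_cases s t₀ with ⟨h, _⟩ | ⟨h, _⟩ <;> rw [hb, h] <;> assumption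
    have haball : a ∈ Metric.ball t₀ δ := by
      rcases min_cases s t₀ with ⟨h, _⟩ | ⟨h, _⟩ <;> rw [ha, h]
      · exact by rwa [Metric.mem_ball, Real.dist_eq]
      · exact Metric.mem_ball_self hδpos
    have hbball : b ∈ Metric.ball t₀ δ := by
      rcases max_cases s t₀ with ⟨h, _⟩ | ⟨h, _⟩ <;> rw [hb, h]
      · exact by rwa [Metric.mem_ball, Real.dist_eq]
      · exact Metric.mem_ball_self hδpos
    have hIccab : Set.Icc a b ⊆ Metric.ball t₀ δ :=
      ((convex_ball t₀ δ).ordConnected).out haball hbball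
    have hIccab' : Set.Icc a b ⊆ Set.Icc (0:ℝ) 1 :=
      Set.Icc_subset_Icc (hBIcc haB).1 (hBIcc hbB).2
    -- Γ₄ is monotone on [a,b]
    have hmono : MonotoneOn (fun t => Γ t 3) (Set.Icc a b) := by
      apply monotoneOn_of_hasDerivWithinAt_nonneg (f' := fun t => Γ' t 3) (convex_Icc a b)
      · exact ((EuclideanSpace.proj (3 : Fin 4)).continuous.comp_continuousOn
          (hΓcont.mono hIccab'))
      · intro x hx
        rw [interior_Icc] at hx
        have hxIcc : x ∈ Set.Icc (0:ℝ) 1 := hIccab' (Set.Ioo_subset_Icc_self hx)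
        have hsub2 : interior (Set.Icc a b) ⊆ Set.Icc (0:ℝ) 1 := by
          rw [interior_Icc]
          exact fun y hy => hIccab' (Set.Ioo_subset_Icc_self hy)
        exact ((((EuclideanSpace.proj (3 : Fin 4)).hasFDerivAt).comp_hasDerivWithinAt x
          (hΓ x hxIcc)).mono hsub2)
      · intro x hx
        rw [interior_Icc] at hx
        have hxIcc : x ∈ Set.Icc (0:ℝ) 1 := hIccab' (Set.Ioo_subset_Icc_self hx)
        have hxball : x ∈ Metric.ball t₀ δ := hIccab (Set.Ioo_subset_Icc_self hx)
        have hpos := hposball x ⟨hxball, hxIcc⟩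
        have hh := (hhoriz x hxIcc).2
        rw [hh]
        positivity
    have hle : Γ a 3 ≤ Γ b 3 :=
      hmono (Set.left_mem_Icc.2 hab.le) (Set.right_mem_Icc.2 hab.le) hab.le
    have hΓa : Γ a = γ a := (hBA haB).1.2
    have hΓb : Γ b = γ b := (hBA hbB).1.2
    have hlt : γ b 3 < γ a 3 := hdec a (hBA haB).2 b (hBA hbB).2 hab
    rw [hΓa, hΓb] at hle
    linarith
  -- conclude
  have hsub : E ⊆ S ∪ (A ∪ ({0, 1} : Set ℝ)) := by
    intro t ht
    by_cases htS : t ∈ S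
    · exact Or.inl htS
    by_cases ht0 : t = 0
    · exact Or.inr (Or.inr (by simp [ht0]))
    by_cases ht1 : t = 1
    · exact Or.inr (Or.inr (by simp [ht1]))
    refine Or.inr (Or.inl ⟨ht, ⟨?_, ?_⟩, htS⟩)
    · exact lt_of_le_of_ne ht.1.1 (Ne.symm ht0)
    · exact lt_of_le_of_ne ht.1.2 ht1
  have hbound : volume E ≤ volume S + (volume A + volume ({0, 1} : Set ℝ)) := by
    refine le_trans (measure_mono hsub) ?_
    refine le_trans (measure_union_le _ _) ?_
    exact add_le_add_right (measure_union_le _ _) _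
  have h01 : volume ({0, 1} : Set ℝ) = 0 :=
    ((Set.countable_singleton (1:ℝ)).insert 0).measure_zero _
  rw [hA0, h01, add_zero, add_zero] at hbound
  exact lt_of_le_of_lt hbound hSmeas
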